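/- Let y_j, r_j, p_j (j = 0,…,j₀+1) be CG iterates for a symmetric matrix H̄ and vector g ≠ 0, well defined with p_ℓᵀ H̄ p_ℓ > 0 and r_ℓ ≠ 0 for all ℓ = 0,…,j₀. Then for any i ∈ {0,…,j₀}: (y_{j₀+1}−y_i)ᵀ H̄ (y_{j₀+1}−y_i) = Σ_{k=i}^{j₀} α_k ‖r_k‖², and ‖y_{j₀+1}−y_i‖² = Σ_{ℓ=0}^{j₀} (1/‖r_ℓ‖²)·[Σ_{k=max{ℓ,i}}^{j₀} α_k ‖r_k‖²]². In particular, the Rayleigh quotient (y_{j₀+1}−y_i)ᵀ H̄ (y_{j₀+1}−y_i)/‖y_{j₀+1}−y_i‖² can be computed from the scalars α_k and ‖r_k‖², k = 0,…,j₀, alone. -/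

import Mathlib

open RealInnerProductSpace

/-- Lemma A.2: the curvature of `y_{j₀+1} − y_i` along `H̄` and its squared
norm can be expressed purely in terms of the CG scalars `α_k` and `‖r_k‖²`. -/
theorem stmt6
    {n : ℕ} (Hb : EuclideanSpace ℝ (Fin n) →L[ℝ] EuclideanSpace ℝ (Fin n))
    (hsym : ∀ x y : EuclideanSpace ℝ (Fin n), ⟪Hb x, y⟫ = ⟪x, Hb y⟫)
    (g : EuclideanSpace ℝ (Fin n)) (hg : g ≠ 0)
    (j₀ : ℕ)
    (y r p : ℕ → EuclideanSpace ℝ (Fin n)) (α : ℕ → ℝ)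
    (hy0 : y 0 = 0) (hr0 : r 0 = g) (hp0 : p 0 = -g)
    (hα : ∀ j ≤ j₀, α j = ‖r j‖^2 / ⟪p j, Hb (p j)⟫)
    (hyrec : ∀ j ≤ j₀, y (j+1) = y j + α j • p j)
    (hrrec : ∀ j ≤ j₀, r (j+1) = r j + α j • Hb (p j))
    (hprec : ∀ j ≤ j₀, p (j+1) = -(r (j+1)) + (‖r (j+1)‖^2 / ‖r j‖^2) • p j)
    (hpcurv : ∀ ℓ ≤ j₀, 0 < ⟪p ℓ, Hb (p ℓ)⟫)
    (hrne : ∀ ℓ ≤ j₀, r ℓ ≠ 0) :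
    ∀ i ≤ j₀,
      ⟪y (j₀+1) - y i, Hb (y (j₀+1) - y i)⟫ =
        ∑ k ∈ Finset.Icc i j₀, α k * ‖r k‖^2 ∧
      ‖y (j₀+1) - y i‖^2 =
        ∑ ℓ ∈ Finset.range (j₀+1),
          (∑ k ∈ Finset.Icc (max ℓ i) j₀, α k * ‖r k‖^2)^2 / ‖r ℓ‖^2 := by
  have hrpos : ∀ ℓ ≤ j₀, (0:ℝ) < ‖r ℓ‖^2 := fun ℓ hℓ =>
    pow_pos (norm_pos_iff.mpr (hrne ℓ hℓ)) 2
  have hαval : ∀ j ≤ j₀, α j * ⟪p j, Hb (p j)⟫ = ‖r j‖^2 := by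
    intro j hj
    rw [hα j hj, div_mul_cancel₀ _ (ne_of_gt (hpcurv j hj))]
  have hαpos : ∀ j ≤ j₀, 0 < α j := by
    intro j hj
    rw [hα j hj]
    exact div_pos (hrpos j hj) (hpcurv j hj)
  have hHp : ∀ i ≤ j₀, Hb (p i) = (α i)⁻¹ • (r (i+1) - r i) := by
    intro i hile
    rw [hrrec i hile, add_sub_cancel_left, smul_smul,
      inv_mul_cancel₀ (ne_of_gt (hαpos i hile)), one_smul]
  -- the classical CG simultaneous induction
  have key : ∀ j ≤ j₀ + 1,
      (∀ i < j, ⟪r j, p i⟫ = 0) ∧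
      (∀ i < j, ⟪r j, r i⟫ = 0) ∧
      (j ≤ j₀ → (∀ i < j, ⟪p j, Hb (p i)⟫ = 0) ∧ ⟪r j, p j⟫ = -‖r j‖^2) := by
    intro j
    induction j with
    | zero =>
      intro _
      refine ⟨fun i hi => absurd hi (Nat.not_lt_zero i),
        fun i hi => absurd hi (Nat.not_lt_zero i),
        fun _ => ⟨fun i hi => absurd hi (Nat.not_lt_zero i), ?_⟩⟩
      rw [hr0, hp0, inner_neg_right, real_inner_self_eq_norm_sq]
    | succ j ih =>
      intro hj1
      have hjle : j ≤ j₀ := by omega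
      obtain ⟨ihA, ihB, ihCD⟩ := ih (by omega)
      obtain ⟨ihC, ihD⟩ := ihCD hjle
      -- (A) at j+1
      have hA : ∀ i < j + 1, ⟪r (j+1), p i⟫ = 0 := by
        intro i hi
        rcases Nat.lt_succ_iff_lt_or_eq.mp hi with hlt | heq
        · rw [hrrec j hjle, inner_add_left, real_inner_smul_left, ihA i hlt,
            hsym (p j) (p i), ihC i hlt, mul_zero, zero_add]
        · rw [heq, hrrec j hjle, inner_add_left, real_inner_smul_left, ihD,
            hsym (p j) (p j), hαval j hjle]
          ring
      -- (B) at j+1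
      have hB : ∀ i < j + 1, ⟪r (j+1), r i⟫ = 0 := by
        intro i hi
        rcases Nat.eq_zero_or_eq_succ_pred i with h0 | hsucc
        · subst h0
          have h : r 0 = -(p 0) := by rw [hr0, hp0, neg_neg]
          rw [h, inner_neg_right, hA 0 hi, neg_zero]
        · set m := i - 1 with hm
          have him : i = m + 1 := hsucc
          have hmle : m ≤ j₀ := by omega
          have h : r i = -(p i) + (‖r i‖^2 / ‖r m‖^2) • p m := by
            have h2 := hprec m hmle
            rw [← him] at h2
            rw [h2]
            abel
          rw [h, inner_add_right, inner_neg_right, hA i hi,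
            real_inner_smul_right, hA m (by omega), neg_zero, mul_zero, zero_add]
      refine ⟨hA, hB, fun hj1le => ?_⟩
      -- (C) at j+1
      have hC : ∀ i < j + 1, ⟪p (j+1), Hb (p i)⟫ = 0 := by
        intro i hi
        have hile : i ≤ j₀ := by omega
        rw [hprec j hjle, inner_add_left, inner_neg_left]
        rcases Nat.lt_succ_iff_lt_or_eq.mp hi with hlt | heq
        · rw [real_inner_smul_left, ihC i hlt, mul_zero, add_zero,
            hHp i hile, real_inner_smul_right, inner_sub_right,
            hB (i+1) (by omega), hB i (by omega), sub_zero, mul_zero, neg_zero]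
        · have hpj : ⟪p j, Hb (p j)⟫ = ‖r j‖^2 / α j := by
            rw [eq_div_iff (ne_of_gt (hαpos j hjle)), mul_comm, hαval j hjle]
          rw [heq, real_inner_smul_left, hpj, hHp j hjle, real_inner_smul_right,
            inner_sub_right, real_inner_self_eq_norm_sq, hB j (Nat.lt_succ_self j),
            sub_zero]
          have h1 := ne_of_gt (hrpos j hjle)
          have h2 := ne_of_gt (hαpos j hjle)
          field_simp
          rw [div_self (norm_ne_zero_iff.mpr (hrne j hjle))]; ring
      refine ⟨hC, ?_⟩
      -- (D) at j+1
      rw [hprec j hjle, inner_add_right, inner_neg_right,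
        real_inner_self_eq_norm_sq, real_inner_smul_right, hA j (by omega),
        mul_zero, add_zero]
  have conj : ∀ j ≤ j₀, ∀ i < j, ⟪p j, Hb (p i)⟫ = 0 :=
    fun j hj i hi => ((key j (by omega)).2.2 hj).1 i hi
  have rorth : ∀ j ≤ j₀, ∀ i < j, ⟪r j, r i⟫ = 0 :=
    fun j hj i hi => (key j (by omega)).2.1 i hi
  -- expression of p_k in terms of residuals
  have hpform : ∀ k ≤ j₀,
      p k = -(‖r k‖^2 • ∑ ℓ ∈ Finset.range (k+1), (‖r ℓ‖^2)⁻¹ • r ℓ) := by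
    intro k
    induction k with
    | zero =>
      intro _
      have h0 : (0:ℕ) ≤ j₀ := Nat.zero_le _
      rw [hp0, Finset.sum_range_one, smul_smul,
        mul_inv_cancel₀ (ne_of_gt (hrpos 0 h0)), one_smul, hr0]
    | succ k ih =>
      intro hk
      have hkle : k ≤ j₀ := by omega
      rw [hprec k hkle, ih hkle, smul_neg, smul_smul,
        div_mul_cancel₀ _ (ne_of_gt (hrpos k hkle))]
      conv_rhs => rw [Finset.sum_range_succ, smul_add, smul_smul,
        mul_inv_cancel₀ (ne_of_gt (hrpos (k+1) hk)), one_smul, neg_add]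
      abel
  -- telescoping sum for y
  have htel : ∀ i ≤ j₀, y (j₀+1) - y i = ∑ k ∈ Finset.Icc i j₀, α k • p k := by
    intro i hi
    have main : ∀ m, i ≤ m → m ≤ j₀ + 1 →
        y m - y i = ∑ k ∈ Finset.Ico i m, α k • p k := by
      intro m
      induction m with
      | zero =>
        intro h1 _
        have : i = 0 := Nat.le_zero.mp h1
        simp [this]
      | succ m ihm =>
        intro h1 h2
        rcases Nat.lt_or_ge m i with hlt | hge
        · have : i = m + 1 := by omega
          simp [this]
        · rw [hyrec m (by omega), Finset.sum_Ico_succ_top hge, ← ihm hge (by omega)]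
          abel
    have h := main (j₀+1) (by omega) (le_refl _)
    rwa [Finset.Ico_add_one_right_eq_Icc] at h
  intro i hi
  set K := Finset.Icc i j₀ with hK
  set S := y (j₀+1) - y i with hSdef
  have hStel : S = ∑ k ∈ K, α k • p k := htel i hi
  constructor
  · -- curvature identity
    have expand : ⟪S, Hb S⟫ = ∑ k ∈ K, ∑ l ∈ K, α k * (α l * ⟪p k, Hb (p l)⟫) := by
      rw [hStel, map_sum, sum_inner]
      refine Finset.sum_congr rfl fun k hk => ?_
      rw [inner_sum]
      refine Finset.sum_congr rfl fun l hl => ?_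
      rw [map_smul, real_inner_smul_left, real_inner_smul_right]
    rw [expand]
    refine Finset.sum_congr rfl fun k hk => ?_
    obtain ⟨hik, hkj⟩ := Finset.mem_Icc.mp hk
    rw [Finset.sum_eq_single k]
    · rw [hαval k hkj]
    · intro l hl hne
      obtain ⟨hil, hlj⟩ := Finset.mem_Icc.mp hl
      rcases lt_or_gt_of_ne hne with hlk | hkl
      · rw [conj k hkj l hlk, mul_zero, mul_zero]
      · have : ⟪p k, Hb (p l)⟫ = 0 := by
          rw [← hsym (p k) (p l), real_inner_comm, conj l hlj k hkl]
        rw [this, mul_zero, mul_zero]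
    · intro hk'
      exact absurd hk hk'
  · -- squared norm identity
    have hSr : S = -∑ ℓ ∈ Finset.range (j₀+1),
        ((∑ k ∈ Finset.Icc (max ℓ i) j₀, α k * ‖r k‖^2) * (‖r ℓ‖^2)⁻¹) • r ℓ := by
      have step1 : S = -∑ k ∈ K, ∑ ℓ ∈ Finset.range (k+1),
          (α k * ‖r k‖^2 * (‖r ℓ‖^2)⁻¹) • r ℓ := by
        rw [hStel, ← Finset.sum_neg_distrib]
        refine Finset.sum_congr rfl fun k hk => ?_
        obtain ⟨hik, hkj⟩ := Finset.mem_Icc.mp hk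
        rw [hpform k hkj, smul_neg, neg_inj, Finset.smul_sum, Finset.smul_sum]
        refine Finset.sum_congr rfl fun ℓ hℓ => ?_
        rw [smul_smul, smul_smul]
      rw [step1, neg_inj]
      rw [Finset.sum_comm' (t' := Finset.range (j₀+1))
        (s' := fun ℓ => Finset.Icc (max ℓ i) j₀)]
      · refine Finset.sum_congr rfl fun ℓ hℓ => ?_
        rw [Finset.sum_mul, ← Finset.sum_smul]
      · intro k ℓ
        simp only [Finset.mem_Icc, Finset.mem_range, hK]
        omega
    have hnorm : ‖S‖^2 = ⟪S, S⟫ := (real_inner_self_eq_norm_sq S).symm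
    rw [hnorm, hSr, inner_neg_neg, sum_inner]
    refine Finset.sum_congr rfl fun ℓ hℓ => ?_
    have hℓj : ℓ ≤ j₀ := by
      have := Finset.mem_range.mp hℓ; omega
    rw [inner_sum, Finset.sum_eq_single ℓ]
    · rw [real_inner_smul_left, real_inner_smul_right, real_inner_self_eq_norm_sq]
      have h1 := ne_of_gt (hrpos ℓ hℓj)
      field_simp
    · intro m hm hne
      have hmj : m ≤ j₀ := by
        have := Finset.mem_range.mp hm; omega
      rcases lt_or_gt_of_ne hne with hml | hlm
      · rw [real_inner_smul_left, real_inner_smul_right,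
          rorth ℓ hℓj m hml, mul_zero, mul_zero]
      · rw [real_inner_smul_left, real_inner_smul_right,
          real_inner_comm, rorth m hmj ℓ hlm, mul_zero, mul_zero]
    · intro hℓ'
      exact absurd hℓ hℓ'
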